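/- arXiv:math/0509326 — 2 statements merged into one kernel-verified Lean document; each statement's English description precedes it below -/
import Mathlib

section
/- There is a constant C such that for every w ∈ C²(ℝ_+×ℝ³), every t ≥ 0 and x ∈ ℝ³: ⟨t−r⟩ |Δw(t,x)| ≤ C Σ_{|α|≤1} |∂ Γ^α w(t,x)| + C (t+r) |□w(t,x)|, where Δ is the spatial Laplacian on ℝ³. -/
open MeasureTheory

noncomputable section

/-- The partial derivative in the `i`-th coordinate direction on `ℝⁿ`. -/
def pd {n : ℕ} (i : Fin n) (u : (Fin n → ℝ) → ℝ) : (Fin n → ℝ) → ℝ :=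
  fun z => fderiv ℝ u z (Pi.single i 1)

/-- Iterated application of a family of first-order operators along a list of indices. -/
def opIter {α γ : Type*} (F : α → γ → γ) : List α → γ → γ
  | [] => id
  | i :: L => fun u => F i (opIter F L u)

/-- The ten vector fields Γ on ℝ×ℝ³ (coordinates: `0 = t`, `1,2,3 = x`):
`∂_t, ∂_{x₁}, ∂_{x₂}, ∂_{x₃}`, the rotations `Ω_{jk} = x_j∂_k - x_k∂_j` (`1 ≤ j < k ≤ 3`)
and the boosts `Ω_{0k} = x_k∂_t + t∂_k` (`k = 1,2,3`). -/
def GammaField (i : Fin 10) (u : (Fin 4 → ℝ) → ℝ) : (Fin 4 → ℝ) → ℝ :=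
  if i.val = 0 then pd 0 u
  else if i.val = 1 then pd 1 u
  else if i.val = 2 then pd 2 u
  else if i.val = 3 then pd 3 u
  else if i.val = 4 then fun z => z 1 * pd 2 u z - z 2 * pd 1 u z
  else if i.val = 5 then fun z => z 1 * pd 3 u z - z 3 * pd 1 u z
  else if i.val = 6 then fun z => z 2 * pd 3 u z - z 3 * pd 2 u z
  else if i.val = 7 then fun z => z 1 * pd 0 u z + z 0 * pd 1 u z
  else if i.val = 8 then fun z => z 2 * pd 0 u z + z 0 * pd 2 u z
  else fun z => z 3 * pd 0 u z + z 0 * pd 3 u z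

/-- The spatial radius `r = |x|` of a space-time point. -/
def rad (z : Fin 4 → ℝ) : ℝ := Real.sqrt ((z 1)^2 + (z 2)^2 + (z 3)^2)

/-- The d'Alembertian `□ = ∂_t² - Δ` on ℝ×ℝ³. -/
def Box (u : (Fin 4 → ℝ) → ℝ) : (Fin 4 → ℝ) → ℝ :=
  fun z => pd 0 (pd 0 u) z - pd 1 (pd 1 u) z - pd 2 (pd 2 u) z - pd 3 (pd 3 u) z

/-- The `L²` norm in `x ∈ ℝ³` at fixed time `t`. -/
def L2x (f : (Fin 4 → ℝ) → ℝ) (t : ℝ) : ℝ :=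
  Real.sqrt (∫ x : Fin 3 → ℝ, (f (Fin.cons t x))^2)

/-- The spatial Laplacian on ℝ×ℝ³ (in the `x` variables). -/
def lap (u : (Fin 4 → ℝ) → ℝ) : (Fin 4 → ℝ) → ℝ :=
  fun z => pd 1 (pd 1 u) z + pd 2 (pd 2 u) z + pd 3 (pd 3 u) z

lemma pd_contDiff {w : (Fin 4 → ℝ) → ℝ} (hw : ContDiff ℝ 2 w) (i : Fin 4) :
    ContDiff ℝ 1 (pd i w) :=
  (hw.fderiv_right (m := 1) (by norm_num)).clm_apply contDiff_const

lemma pd_symm {w : (Fin 4 → ℝ) → ℝ} (hw : ContDiff ℝ 2 w) (i j : Fin 4) (z : Fin 4 → ℝ) :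
    pd i (pd j w) z = pd j (pd i w) z := by
  have hdw : Differentiable ℝ w := hw.differentiable (by norm_num)
  have h1 : Differentiable ℝ (fderiv ℝ w) :=
    (hw.fderiv_right (m := 1) (by norm_num)).differentiable one_ne_zero
  have e : ∀ a b : Fin 4,
      pd a (pd b w) z = (fderiv ℝ (fderiv ℝ w) z (Pi.single a 1)) (Pi.single b 1) := by
    intro a b
    have hL : HasFDerivAt ((ContinuousLinearMap.apply ℝ ℝ (Pi.single b (1:ℝ))) ∘ (fderiv ℝ w))
        ((ContinuousLinearMap.apply ℝ ℝ (Pi.single b (1:ℝ))).comp (fderiv ℝ (fderiv ℝ w) z)) z :=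
      ((ContinuousLinearMap.apply ℝ ℝ (Pi.single b (1:ℝ) : Fin 4 → ℝ)).hasFDerivAt).comp z (h1 z).hasFDerivAt
    have : pd b w = (ContinuousLinearMap.apply ℝ ℝ (Pi.single b (1:ℝ))) ∘ (fderiv ℝ w) := rfl
    rw [pd, this, hL.fderiv]
    rfl
  rw [e i j, e j i]
  exact second_derivative_symmetric (fun y => (hdw y).hasFDerivAt) (h1 z).hasFDerivAt _ _

lemma pd_field {f g : (Fin 4 → ℝ) → ℝ} (hf : Differentiable ℝ f) (hg : Differentiable ℝ g)
    (a i : Fin 4) (z : Fin 4 → ℝ) :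
    pd i (fun y => y a * f y + y 0 * g y) z =
      (if i = a then 1 else 0) * f z + z a * pd i f z
      + (if i = 0 then 1 else 0) * g z + z 0 * pd i g z := by
  have hca : ∀ c : Fin 4, DifferentiableAt ℝ (fun y : Fin 4 → ℝ => y c) z :=
    fun c => (ContinuousLinearMap.proj c : (Fin 4 → ℝ) →L[ℝ] ℝ).differentiableAt
  have hfd : ∀ c : Fin 4, fderiv ℝ (fun y : Fin 4 → ℝ => y c) z = ContinuousLinearMap.proj c :=
    fun c => (ContinuousLinearMap.proj c : (Fin 4 → ℝ) →L[ℝ] ℝ).fderiv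
  rw [pd, fderiv_fun_add ((hca a).fun_mul (hf z)) ((hca 0).fun_mul (hg z)),
    fderiv_fun_mul (hca a) (hf z), fderiv_fun_mul (hca 0) (hg z)]
  simp [hfd, Pi.single_apply, pd]
  ring_nf
  simp [eq_comm]
  ring

set_option maxHeartbeats 2000000 in
/-- Klainerman–Sideris type pointwise estimate: there is a constant `C` such
that for every `w ∈ C²(ℝ₊×ℝ³)`, every `t ≥ 0` and `x ∈ ℝ³`,
`⟨t-r⟩ |Δw(t,x)| ≤ C Σ_{|α|≤1} |∂Γ^α w(t,x)| + C (t+r)|□w(t,x)|`. -/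
theorem stmt5 :
    ∃ C : ℝ, 0 < C ∧
      ∀ w : (Fin 4 → ℝ) → ℝ, ContDiff ℝ 2 w →
        ∀ t : ℝ, 0 ≤ t → ∀ x : Fin 3 → ℝ,
          Real.sqrt (1 + (t - Real.sqrt ((x 0)^2 + (x 1)^2 + (x 2)^2))^2) *
              |lap w (Fin.cons t x)| ≤
            C * (∑ n ∈ Finset.range 2, ∑ σ : Fin n → Fin 10, ∑ i : Fin 4,
                  |pd i (opIter GammaField (List.ofFn σ) w) (Fin.cons t x)|) +
            C * (t + Real.sqrt ((x 0)^2 + (x 1)^2 + (x 2)^2)) * |Box w (Fin.cons t x)| := by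
  refine ⟨9, by norm_num, ?_⟩
  intro w hw t ht x
  set z : Fin 4 → ℝ := Fin.cons t x with hzdef
  set r : ℝ := Real.sqrt ((x 0)^2 + (x 1)^2 + (x 2)^2) with hrdef
  set S : ℝ := ∑ n ∈ Finset.range 2, ∑ σ : Fin n → Fin 10, ∑ i : Fin 4,
      |pd i (opIter GammaField (List.ofFn σ) w) z| with hSdef
  have hr0 : 0 ≤ r := Real.sqrt_nonneg _
  have hSnn : 0 ≤ S := by
    rw [hSdef]
    refine Finset.sum_nonneg fun n _ => Finset.sum_nonneg fun σ _ =>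
      Finset.sum_nonneg fun i _ => abs_nonneg _
  -- individual terms are bounded by S
  have hS1 : ∀ (k : Fin 10) (i : Fin 4), |pd i (GammaField k w) z| ≤ S := by
    intro k i
    have h1 : (∑ σ : Fin 1 → Fin 10, ∑ i : Fin 4,
        |pd i (opIter GammaField (List.ofFn σ) w) z|) ≤ S := by
      rw [hSdef]
      refine Finset.single_le_sum (f := fun n => ∑ σ : Fin n → Fin 10, ∑ i : Fin 4,
          |pd i (opIter GammaField (List.ofFn σ) w) z|) ?_ (by norm_num)
      intro n _
      exact Finset.sum_nonneg fun σ _ => Finset.sum_nonneg fun i _ => abs_nonneg _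
    have h2 : (∑ i : Fin 4, |pd i (opIter GammaField (List.ofFn (fun _ : Fin 1 => k)) w) z|)
        ≤ ∑ σ : Fin 1 → Fin 10, ∑ i : Fin 4, |pd i (opIter GammaField (List.ofFn σ) w) z| :=
      Finset.single_le_sum (f := fun σ : Fin 1 → Fin 10 => ∑ i : Fin 4,
          |pd i (opIter GammaField (List.ofFn σ) w) z|)
        (fun σ _ => Finset.sum_nonneg fun i _ => abs_nonneg _) (Finset.mem_univ _)
    have h3 : |pd i (opIter GammaField (List.ofFn (fun _ : Fin 1 => k)) w) z|
        ≤ ∑ i : Fin 4, |pd i (opIter GammaField (List.ofFn (fun _ : Fin 1 => k)) w) z| :=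
      Finset.single_le_sum (f := fun i : Fin 4 =>
          |pd i (opIter GammaField (List.ofFn (fun _ : Fin 1 => k)) w) z|)
        (fun i _ => abs_nonneg _) (Finset.mem_univ i)
    exact le_trans (le_trans h3 h2) h1
  have hS0 : ∀ i : Fin 4, |pd i w z| ≤ S := by
    intro i
    have h1 : (∑ σ : Fin 0 → Fin 10, ∑ i : Fin 4,
        |pd i (opIter GammaField (List.ofFn σ) w) z|) ≤ S := by
      rw [hSdef]
      refine Finset.single_le_sum (f := fun n => ∑ σ : Fin n → Fin 10, ∑ i : Fin 4,
          |pd i (opIter GammaField (List.ofFn σ) w) z|) ?_ (by norm_num)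
      intro n _
      exact Finset.sum_nonneg fun σ _ => Finset.sum_nonneg fun i _ => abs_nonneg _
    have h2 : (∑ i : Fin 4, |pd i (opIter GammaField (List.ofFn (fun j : Fin 0 => j.elim0)) w) z|)
        ≤ ∑ σ : Fin 0 → Fin 10, ∑ i : Fin 4, |pd i (opIter GammaField (List.ofFn σ) w) z| :=
      Finset.single_le_sum (f := fun σ : Fin 0 → Fin 10 => ∑ i : Fin 4,
          |pd i (opIter GammaField (List.ofFn σ) w) z|)
        (fun σ _ => Finset.sum_nonneg fun i _ => abs_nonneg _) (Finset.mem_univ _)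
    have h3 : |pd i w z|
        ≤ ∑ i : Fin 4, |pd i (opIter GammaField (List.ofFn (fun j : Fin 0 => j.elim0)) w) z| :=
      Finset.single_le_sum (f := fun i => |pd i (opIter GammaField
        (List.ofFn (fun j : Fin 0 => j.elim0)) w) z|) (fun i _ => abs_nonneg _) (Finset.mem_univ i)
    exact le_trans (le_trans h3 h2) h1
  have hd1 : ∀ i : Fin 4, Differentiable ℝ (pd i w) :=
    fun i => (pd_contDiff hw i).differentiable one_ne_zero
  have hz0 : z 0 = t := rfl
  have hz1 : z 1 = x 0 := rfl
  have hz2 : z 2 = x 1 := rfl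
  have hz3 : z 3 = x 2 := rfl
  -- derivative computations for the boost fields
  have e1 : pd 1 (GammaField 7 w) z
      = pd 0 w z + x 0 * pd 0 (pd 1 w) z + t * pd 1 (pd 1 w) z := by
    have h := pd_field (hd1 0) (hd1 1) 1 1 z
    rw [show GammaField 7 w = fun y => y 1 * pd 0 w y + y 0 * pd 1 w y from rfl, h,
      pd_symm hw 1 0, hz0, hz1, if_pos rfl, if_neg (show (1:Fin 4) ≠ 0 by decide)]
    ring
  have e2 : pd 2 (GammaField 8 w) z
      = pd 0 w z + x 1 * pd 0 (pd 2 w) z + t * pd 2 (pd 2 w) z := by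
    have h := pd_field (hd1 0) (hd1 2) 2 2 z
    rw [show GammaField 8 w = fun y => y 2 * pd 0 w y + y 0 * pd 2 w y from rfl, h,
      pd_symm hw 2 0, hz0, hz2, if_pos rfl, if_neg (show (2:Fin 4) ≠ 0 by decide)]
    ring
  have e3 : pd 3 (GammaField 9 w) z
      = pd 0 w z + x 2 * pd 0 (pd 3 w) z + t * pd 3 (pd 3 w) z := by
    have h := pd_field (hd1 0) (hd1 3) 3 3 z
    rw [show GammaField 9 w = fun y => y 3 * pd 0 w y + y 0 * pd 3 w y from rfl, h,
      pd_symm hw 3 0, hz0, hz3, if_pos rfl, if_neg (show (3:Fin 4) ≠ 0 by decide)]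
    ring
  have f1 : pd 0 (GammaField 7 w) z
      = x 0 * pd 0 (pd 0 w) z + pd 1 w z + t * pd 0 (pd 1 w) z := by
    have h := pd_field (hd1 0) (hd1 1) 1 0 z
    rw [show GammaField 7 w = fun y => y 1 * pd 0 w y + y 0 * pd 1 w y from rfl, h, hz0, hz1,
      if_neg (show (0:Fin 4) ≠ 1 by decide), if_pos rfl]
    ring
  have f2 : pd 0 (GammaField 8 w) z
      = x 1 * pd 0 (pd 0 w) z + pd 2 w z + t * pd 0 (pd 2 w) z := by
    have h := pd_field (hd1 0) (hd1 2) 2 0 z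
    rw [show GammaField 8 w = fun y => y 2 * pd 0 w y + y 0 * pd 2 w y from rfl, h, hz0, hz2,
      if_neg (show (0:Fin 4) ≠ 2 by decide), if_pos rfl]
    ring
  have f3 : pd 0 (GammaField 9 w) z
      = x 2 * pd 0 (pd 0 w) z + pd 3 w z + t * pd 0 (pd 3 w) z := by
    have h := pd_field (hd1 0) (hd1 3) 3 0 z
    rw [show GammaField 9 w = fun y => y 3 * pd 0 w y + y 0 * pd 3 w y from rfl, h, hz0, hz3,
      if_neg (show (0:Fin 4) ≠ 3 by decide), if_pos rfl]
    ring
  have hr2 : r^2 = (x 0)^2 + (x 1)^2 + (x 2)^2 := Real.sq_sqrt (by positivity)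
  -- the key identity
  have hident : (t^2 - r^2) * lap w z =
      t * pd 1 (GammaField 7 w) z + t * pd 2 (GammaField 8 w) z + t * pd 3 (GammaField 9 w) z
      - x 0 * pd 0 (GammaField 7 w) z - x 1 * pd 0 (GammaField 8 w) z
      - x 2 * pd 0 (GammaField 9 w) z
      - 3 * (t * pd 0 w z) + x 0 * pd 1 w z + x 1 * pd 2 w z + x 2 * pd 3 w z
      + r^2 * Box w z := by
    rw [e1, e2, e3, f1, f2, f3, hr2,
      show Box w z = pd 0 (pd 0 w) z - pd 1 (pd 1 w) z - pd 2 (pd 2 w) z - pd 3 (pd 3 w) z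
        from rfl,
      show lap w z = pd 1 (pd 1 w) z + pd 2 (pd 2 w) z + pd 3 (pd 3 w) z from rfl]
    ring
  -- bounds on the pieces
  have hLb : |lap w z| ≤ 3 * S := by
    have h1 : |pd 1 (pd 1 w) z| ≤ S := hS1 1 1
    have h2 : |pd 2 (pd 2 w) z| ≤ S := hS1 2 2
    have h3 : |pd 3 (pd 3 w) z| ≤ S := hS1 3 3
    calc |lap w z| ≤ |pd 1 (pd 1 w) z| + |pd 2 (pd 2 w) z| + |pd 3 (pd 3 w) z| := by
          rw [show lap w z = pd 1 (pd 1 w) z + pd 2 (pd 2 w) z + pd 3 (pd 3 w) z from rfl]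
          exact (abs_add_le _ _).trans (add_le_add_left (abs_add_le _ _) _)
      _ ≤ 3 * S := by linarith
  have hx1 : |x 0| ≤ r := by
    rw [hrdef, ← Real.sqrt_sq_eq_abs]
    exact Real.sqrt_le_sqrt (by nlinarith [sq_nonneg (x 1), sq_nonneg (x 2)])
  have hx2 : |x 1| ≤ r := by
    rw [hrdef, ← Real.sqrt_sq_eq_abs]
    exact Real.sqrt_le_sqrt (by nlinarith [sq_nonneg (x 0), sq_nonneg (x 2)])
  have hx3 : |x 2| ≤ r := by
    rw [hrdef, ← Real.sqrt_sq_eq_abs]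
    exact Real.sqrt_le_sqrt (by nlinarith [sq_nonneg (x 0), sq_nonneg (x 1)])
  have hprod : ∀ u v : ℝ, ∀ c d : ℝ, |u| ≤ c → |v| ≤ d → |u * v| ≤ c * d := by
    intro u v c d hu hv
    rw [abs_mul]
    exact mul_le_mul hu hv (abs_nonneg _) (le_trans (abs_nonneg _) hu)
  have habs_t : |t| ≤ t := by rw [abs_of_nonneg ht]
  have m1 := hprod t _ t S habs_t (hS1 7 1)
  have m2 := hprod t _ t S habs_t (hS1 8 2)
  have m3 := hprod t _ t S habs_t (hS1 9 3)
  have m4 := hprod (x 0) _ r S hx1 (hS1 7 0)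
  have m5 := hprod (x 1) _ r S hx2 (hS1 8 0)
  have m6 := hprod (x 2) _ r S hx3 (hS1 9 0)
  have m7 := hprod t _ t S habs_t (hS0 0)
  have m8 := hprod (x 0) _ r S hx1 (hS0 1)
  have m9 := hprod (x 1) _ r S hx2 (hS0 2)
  have m10 := hprod (x 2) _ r S hx3 (hS0 3)
  have m11 : |r^2 * Box w z| ≤ r^2 * |Box w z| := by
    rw [abs_mul, abs_of_nonneg (sq_nonneg r)]
  have key : |(t^2 - r^2) * lap w z| ≤ 6 * t * S + 6 * r * S + r^2 * |Box w z| := by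
    obtain ⟨a1, b1⟩ := abs_le.mp m1
    obtain ⟨a2, b2⟩ := abs_le.mp m2
    obtain ⟨a3, b3⟩ := abs_le.mp m3
    obtain ⟨a4, b4⟩ := abs_le.mp m4
    obtain ⟨a5, b5⟩ := abs_le.mp m5
    obtain ⟨a6, b6⟩ := abs_le.mp m6
    obtain ⟨a7, b7⟩ := abs_le.mp m7
    obtain ⟨a8, b8⟩ := abs_le.mp m8
    obtain ⟨a9, b9⟩ := abs_le.mp m9
    obtain ⟨a10, b10⟩ := abs_le.mp m10
    obtain ⟨a11, b11⟩ := abs_le.mp m11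
    refine abs_le.mpr ⟨?_, ?_⟩ <;> rw [hident] <;> linarith
  -- the weighted bound
  have step2 : |t - r| * |lap w z| ≤ 6 * S + (t + r) * |Box w z| := by
    rcases eq_or_lt_of_le (add_nonneg ht hr0) with htr | htr
    · have ht0 : t = 0 := by linarith [abs_nonneg (t - r)]
      have hr0' : r = 0 := by linarith
      rw [ht0, hr0', sub_zero, abs_zero]
      simp
      positivity
    · have hmul : (t + r) * (|t - r| * |lap w z|) ≤ (t + r) * (6 * S + (t + r) * |Box w z|) := by
        have lhs_eq : (t + r) * (|t - r| * |lap w z|) = |(t^2 - r^2) * lap w z| := by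
          rw [abs_mul, show t^2 - r^2 = (t + r) * (t - r) by ring, abs_mul,
            abs_of_nonneg (add_nonneg ht hr0)]
          ring
        rw [lhs_eq]
        refine key.trans ?_
        nlinarith [abs_nonneg (Box w z), mul_nonneg (mul_nonneg ht hr0) (abs_nonneg (Box w z)),
          mul_nonneg (mul_nonneg ht ht) (abs_nonneg (Box w z))]
      exact le_of_mul_le_mul_left hmul htr
  have hsq : Real.sqrt (1 + (t - r)^2) ≤ 1 + |t - r| := by
    have h := Real.sqrt_le_sqrt (show 1 + (t - r)^2 ≤ (1 + |t - r|)^2 by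
      nlinarith [abs_nonneg (t - r), sq_abs (t - r)])
    rwa [Real.sqrt_sq (by positivity)] at h
  have hBnn : 0 ≤ (t + r) * |Box w z| := mul_nonneg (add_nonneg ht hr0) (abs_nonneg _)
  calc Real.sqrt (1 + (t - r)^2) * |lap w z| ≤ (1 + |t - r|) * |lap w z| :=
        mul_le_mul_of_nonneg_right hsq (abs_nonneg _)
    _ = |lap w z| + |t - r| * |lap w z| := by ring
    _ ≤ 3 * S + (6 * S + (t + r) * |Box w z|) := add_le_add hLb step2
    _ ≤ 9 * S + 9 * (t + r) * |Box w z| := by linarith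
end
end

section
/- There is a constant C such that for every w ∈ C²(ℝ_+×ℝ³), every t ≥ 0 and x ∈ ℝ³: ⟨t−r⟩ |∇_x ∂_t w(t,x)| ≤ C Σ_{|α|≤1} |∂ Γ^α w(t,x)| + C t |□w(t,x)|, where ∇_x is the spatial gradient. -/
open MeasureTheory

noncomputable section

set_option maxHeartbeats 1000000 in
lemma KS_abs_le_r (a b c r : ℝ) (hr0 : 0 ≤ r) (h : r^2 = a^2 + b^2 + c^2) : |a| ≤ r := by
  nlinarith [abs_nonneg a, sq_abs a, sq_nonneg b, sq_nonneg c]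

set_option maxHeartbeats 1000000 in
lemma KS_arith_A (t r a1 a2 a3 A D P1 P2 P3 Q11 Q22 Q33 : ℝ)
    (ht : 0 ≤ t) (hr0 : 0 ≤ r) (hr2 : r^2 = a1^2+a2^2+a3^2)
    (key : (t^2 - r^2)*A = t*(Q11+Q22+Q33) - (a1*P1+a2*P2+a3*P3) + t^2*D) :
    |t - r| * |A| ≤ (|Q11|+|Q22|+|Q33|) + (|P1|+|P2|+|P3|) + t*|D| := by
  have ha1 : |a1| ≤ r := KS_abs_le_r a1 a2 a3 r hr0 hr2
  have ha2 : |a2| ≤ r := KS_abs_le_r a2 a1 a3 r hr0 (by linarith)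
  have ha3 : |a3| ≤ r := KS_abs_le_r a3 a1 a2 r hr0 (by linarith)
  rcases eq_or_lt_of_le (add_nonneg ht hr0) with h0 | hpos
  · have ht0 : t = 0 := by linarith [abs_nonneg (t-r)]
    have hr' : r = 0 := by linarith
    simp [ht0, hr', abs_nonneg, add_nonneg]
    positivity
  · rw [← mul_le_mul_iff_of_pos_right hpos]
    have e1 : |t - r| * |A| * (t + r) = |(t^2 - r^2)*A| := by
      rw [abs_mul, show (t^2 - r^2) = (t-r)*(t+r) by ring, abs_mul,
        abs_of_nonneg (by linarith : (0:ℝ) ≤ t + r)]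
      ring
    rw [e1, key]
    have h2 : |t*(Q11+Q22+Q33) - (a1*P1+a2*P2+a3*P3) + t^2*D| ≤
        t*(|Q11|+|Q22|+|Q33|) + r*(|P1|+|P2|+|P3|) + t^2*|D| := by
      have b1 : |t*(Q11+Q22+Q33)| ≤ t*(|Q11|+|Q22|+|Q33|) := by
        rw [abs_mul, abs_of_nonneg ht]
        exact mul_le_mul_of_nonneg_left (abs_add_three _ _ _) ht
      have b2 : |a1*P1+a2*P2+a3*P3| ≤ r*(|P1|+|P2|+|P3|) := by
        refine (abs_add_three _ _ _).trans ?_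
        rw [abs_mul, abs_mul, abs_mul]
        nlinarith [abs_nonneg P1, abs_nonneg P2, abs_nonneg P3, abs_nonneg a1, abs_nonneg a2, abs_nonneg a3]
      have b3 : |t^2*D| = t^2*|D| := by rw [abs_mul, abs_of_nonneg (sq_nonneg t)]
      have t1 := abs_add_le (t*(Q11+Q22+Q33) - (a1*P1+a2*P2+a3*P3)) (t^2*D)
      have t2 := abs_sub (t*(Q11+Q22+Q33)) (a1*P1+a2*P2+a3*P3)
      linarith
    refine h2.trans ?_
    nlinarith [abs_nonneg Q11, abs_nonneg Q22, abs_nonneg Q33, abs_nonneg P1, abs_nonneg P2,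
      abs_nonneg P3, abs_nonneg D, mul_nonneg ht (abs_nonneg D)]

set_option maxHeartbeats 1000000 in
lemma KS_tri5 (r t a1 a2 a3 A D Q12 Q21 Q13 Q31 Q11 Q22 Q33 : ℝ)
    (ht : 0 ≤ t) (hr0 : 0 ≤ r) (ha1 : |a1| ≤ r) (ha2 : |a2| ≤ r) (ha3 : |a3| ≤ r) :
    |a2*(Q12-Q21) + a3*(Q13-Q31) + a1*(Q11+Q22+Q33) - a1*t*A + a1*t*D| ≤
      r*(|Q12|+|Q21|+|Q13|+|Q31|+|Q11|+|Q22|+|Q33|) + r*(t*|A|) + r*(t*|D|) := by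
  have hb1 : |a2*(Q12-Q21)| ≤ r*(|Q12|+|Q21|) := by
    rw [abs_mul]
    exact mul_le_mul ha2 (abs_sub _ _) (abs_nonneg _) hr0
  have hb2 : |a3*(Q13-Q31)| ≤ r*(|Q13|+|Q31|) := by
    rw [abs_mul]
    exact mul_le_mul ha3 (abs_sub _ _) (abs_nonneg _) hr0
  have hb3 : |a1*(Q11+Q22+Q33)| ≤ r*(|Q11|+|Q22|+|Q33|) := by
    rw [abs_mul]
    exact mul_le_mul ha1 (abs_add_three _ _ _) (abs_nonneg _) hr0
  have hb4 : |a1*t*A| ≤ r*(t*|A|) := by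
    rw [abs_mul, abs_mul, abs_of_nonneg ht, mul_assoc]
    exact mul_le_mul_of_nonneg_right ha1 (mul_nonneg ht (abs_nonneg A))
  have hb5 : |a1*t*D| ≤ r*(t*|D|) := by
    rw [abs_mul, abs_mul, abs_of_nonneg ht, mul_assoc]
    exact mul_le_mul_of_nonneg_right ha1 (mul_nonneg ht (abs_nonneg D))
  have t1 := abs_add_le (a2*(Q12-Q21) + a3*(Q13-Q31) + a1*(Q11+Q22+Q33) - a1*t*A) (a1*t*D)
  have t2 := abs_sub (a2*(Q12-Q21) + a3*(Q13-Q31) + a1*(Q11+Q22+Q33)) (a1*t*A)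
  have t3 := abs_add_le (a2*(Q12-Q21) + a3*(Q13-Q31)) (a1*(Q11+Q22+Q33))
  have t4 := abs_add_le (a2*(Q12-Q21)) (a3*(Q13-Q31))
  linarith

set_option maxHeartbeats 1000000 in
lemma KS_arith_B (t r a1 a2 a3 A B1 B2 B3 C11 C22 C33 C12 C13 C23 D
    P1 P2 P3 Q11 Q12 Q13 Q21 Q22 Q23 Q31 Q32 Q33 : ℝ)
    (ht : 0 ≤ t) (hr0 : 0 ≤ r) (hr2 : r^2 = a1^2+a2^2+a3^2)
    (hP1 : P1 = a1*A + t*B1) (hP2 : P2 = a2*A + t*B2) (hP3 : P3 = a3*A + t*B3)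
    (hQ11 : Q11 = a1*B1 + t*C11) (hQ12 : Q12 = a2*B1 + t*C12) (hQ13 : Q13 = a3*B1 + t*C13)
    (hQ21 : Q21 = a1*B2 + t*C12) (hQ22 : Q22 = a2*B2 + t*C22) (hQ23 : Q23 = a3*B2 + t*C23)
    (hQ31 : Q31 = a1*B3 + t*C13) (hQ32 : Q32 = a2*B3 + t*C23) (hQ33 : Q33 = a3*B3 + t*C33)
    (hD : D = A - C11 - C22 - C33) :
    |t - r| * |B1| ≤ 5*((|P1|+|P2|+|P3|) +
      (|Q11|+|Q12|+|Q13|+|Q21|+|Q22|+|Q23|+|Q31|+|Q32|+|Q33|) + t*|D|) := by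
  have ha1 : |a1| ≤ r := KS_abs_le_r a1 a2 a3 r hr0 hr2
  have ha2 : |a2| ≤ r := KS_abs_le_r a2 a1 a3 r hr0 (by linarith)
  have ha3 : |a3| ≤ r := KS_abs_le_r a3 a1 a2 r hr0 (by linarith)
  have key : (t^2 - r^2)*A = t*(Q11+Q22+Q33) - (a1*P1+a2*P2+a3*P3) + t^2*D := by
    subst hP1 hP2 hP3 hQ11 hQ22 hQ33 hD
    linear_combination (-A) * hr2
  have KA : |t - r| * |A| ≤ (|Q11|+|Q22|+|Q33|) + (|P1|+|P2|+|P3|) + t*|D| :=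
    KS_arith_A t r a1 a2 a3 A D P1 P2 P3 Q11 Q22 Q33 ht hr0 hr2 key
  set M := (|P1|+|P2|+|P3|) +
      (|Q11|+|Q12|+|Q13|+|Q21|+|Q22|+|Q23|+|Q31|+|Q32|+|Q33|) + t*|D| with hM
  have hM0 : 0 ≤ M := by positivity
  have hMsub : (|Q11|+|Q22|+|Q33|) + (|P1|+|P2|+|P3|) + t*|D| ≤ M := by
    rw [hM]
    have := abs_nonneg Q12; have := abs_nonneg Q13; have := abs_nonneg Q21
    have := abs_nonneg Q23; have := abs_nonneg Q31; have := abs_nonneg Q32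
    linarith
  rcases le_or_gt r (2*t) with hcase | hcase
  · rcases eq_or_lt_of_le ht with h0 | htpos
    · have hr' : r = 0 := le_antisymm (by linarith) hr0
      rw [← h0, hr']
      simpa using by positivity
    · rw [← mul_le_mul_iff_of_pos_left htpos]
      have e1 : t * B1 = P1 - a1*A := by rw [hP1]; ring
      have e2 : t * (|t-r| * |B1|) = |t-r| * |t*B1| := by
        rw [abs_mul, abs_of_nonneg ht]; ring
      rw [e2, e1]
      have htr : |t - r| ≤ t := abs_le.mpr ⟨by linarith, by linarith⟩
      have tri : |P1 - a1*A| ≤ |P1| + |a1| * |A| := by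
        have := abs_sub P1 (a1*A); rw [abs_mul] at this; linarith
      calc |t-r| * |P1 - a1*A| ≤ |t-r| * (|P1| + |a1| * |A|) :=
            mul_le_mul_of_nonneg_left tri (abs_nonneg _)
        _ = |t-r| * |P1| + |a1| * (|t-r| * |A|) := by ring
        _ ≤ t * |P1| + (2*t) * ((|Q11|+|Q22|+|Q33|) + (|P1|+|P2|+|P3|) + t*|D|) := by
            have b1 : |t-r| * |P1| ≤ t * |P1| :=
              mul_le_mul_of_nonneg_right htr (abs_nonneg _)
            have b2 : |a1| * (|t-r| * |A|) ≤ (2*t) * ((|Q11|+|Q22|+|Q33|) + (|P1|+|P2|+|P3|) + t*|D|) := by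
              refine mul_le_mul (by linarith) KA (by positivity) (by linarith)
            linarith
        _ ≤ t * (5*M) := by
            have h1 : |P1| ≤ M := by
              rw [hM]
              have := abs_nonneg Q11; have := abs_nonneg Q12; have := abs_nonneg Q13
              have := abs_nonneg Q21; have := abs_nonneg Q22; have := abs_nonneg Q23
              have := abs_nonneg Q31; have := abs_nonneg Q32; have := abs_nonneg Q33
              have := abs_nonneg P2; have := abs_nonneg P3
              have := mul_nonneg ht (abs_nonneg D)
              linarith
            nlinarith [mul_le_mul_of_nonneg_left hMsub (le_of_lt htpos),
              mul_le_mul_of_nonneg_left h1 (le_of_lt htpos)]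
  · have hrpos : 0 < r := by linarith
    have habs : |t - r| = r - t := by rw [abs_sub_comm]; exact abs_of_nonneg (by linarith)
    have key2 : r^2*B1 = a2*(Q12-Q21) + a3*(Q13-Q31) + a1*(Q11+Q22+Q33) - a1*t*A + a1*t*D := by
      subst hQ12 hQ21 hQ13 hQ31 hQ11 hQ22 hQ33 hD
      linear_combination B1 * hr2
    have step1 : |a2*(Q12-Q21) + a3*(Q13-Q31) + a1*(Q11+Q22+Q33) - a1*t*A + a1*t*D| ≤
        r*(|Q12|+|Q21|+|Q13|+|Q31|+|Q11|+|Q22|+|Q33|) + r*(t*|A|) + r*(t*|D|) :=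
      KS_tri5 r t a1 a2 a3 A D Q12 Q21 Q13 Q31 Q11 Q22 Q33 ht hr0 ha1 ha2 ha3
    have step3 : t*|A| ≤ (|Q11|+|Q22|+|Q33|) + (|P1|+|P2|+|P3|) + t*|D| := by
      have : t * |A| ≤ |t - r| * |A| := by
        rw [habs]
        exact mul_le_mul_of_nonneg_right (by linarith) (abs_nonneg _)
      linarith
    have step2 : r * (r*|B1|) ≤ r * (5*M) := by
      have e3 : r * (r*|B1|) = |r^2*B1| := by
        rw [abs_mul, abs_of_nonneg (sq_nonneg r)]; ring
      rw [e3, key2]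
      refine step1.trans ?_
      have inner : (|Q12|+|Q21|+|Q13|+|Q31|+|Q11|+|Q22|+|Q33|) + (t*|A|) + (t*|D|) ≤ 5*M := by
        rw [hM]
        have := abs_nonneg Q23; have := abs_nonneg Q32
        have := abs_nonneg P1; have := abs_nonneg P2; have := abs_nonneg P3
        have := abs_nonneg Q11; have := abs_nonneg Q12; have := abs_nonneg Q13
        have := abs_nonneg Q21; have := abs_nonneg Q22; have := abs_nonneg Q33
        have := abs_nonneg Q31
        have := mul_nonneg ht (abs_nonneg D)
        linarith [step3]
      have e : r*(|Q12|+|Q21|+|Q13|+|Q31|+|Q11|+|Q22|+|Q33|) + r*(t*|A|) + r*(t*|D|) =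
          r*((|Q12|+|Q21|+|Q13|+|Q31|+|Q11|+|Q22|+|Q33|) + (t*|A|) + (t*|D|)) := by ring
      rw [e]
      exact mul_le_mul_of_nonneg_left inner hr0
    have step4 : r * |B1| ≤ 5*M := le_of_mul_le_mul_left step2 hrpos
    calc |t - r| * |B1| ≤ r * |B1| := by
          rw [habs]
          exact mul_le_mul_of_nonneg_right (by linarith) (abs_nonneg _)
      _ ≤ 5*M := step4

lemma KS_sqrt1 (d : ℝ) : Real.sqrt (1 + d^2) ≤ 1 + |d| := by
  have h : 1 + d^2 ≤ (1 + |d|)^2 := by nlinarith [abs_nonneg d, sq_abs d]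
  calc Real.sqrt (1 + d^2) ≤ Real.sqrt ((1+|d|)^2) := Real.sqrt_le_sqrt h
    _ = 1 + |d| := Real.sqrt_sq (by positivity)

lemma KS_sqrt3 (b1 b2 b3 : ℝ) : Real.sqrt (b1^2 + b2^2 + b3^2) ≤ |b1| + |b2| + |b3| := by
  have h : b1^2+b2^2+b3^2 ≤ (|b1|+|b2|+|b3|)^2 := by
    nlinarith [abs_nonneg b1, abs_nonneg b2, abs_nonneg b3, sq_abs b1, sq_abs b2, sq_abs b3,
      mul_nonneg (abs_nonneg b1) (abs_nonneg b2), mul_nonneg (abs_nonneg b1) (abs_nonneg b3),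
      mul_nonneg (abs_nonneg b2) (abs_nonneg b3)]
  calc Real.sqrt (b1^2+b2^2+b3^2) ≤ Real.sqrt ((|b1|+|b2|+|b3|)^2) := Real.sqrt_le_sqrt h
    _ = |b1| + |b2| + |b3| := Real.sqrt_sq (by positivity)

lemma KS_contDiff_pd {u : (Fin 4 → ℝ) → ℝ} (hu : ContDiff ℝ 2 u) (i : Fin 4) :
    ContDiff ℝ 1 (pd i u) := by
  have h1 : ContDiff ℝ 1 (fderiv ℝ u) := hu.fderiv_right (by norm_num)
  exact h1.clm_apply contDiff_const

lemma KS_diffAt_pd {u : (Fin 4 → ℝ) → ℝ} (hu : ContDiff ℝ 2 u) (i : Fin 4) (z : Fin 4 → ℝ) :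
    DifferentiableAt ℝ (pd i u) z :=
  ((KS_contDiff_pd hu i).differentiable (by norm_num)).differentiableAt

lemma KS_pd_comm {u : (Fin 4 → ℝ) → ℝ} (hu : ContDiff ℝ 2 u) (i j : Fin 4) (z : Fin 4 → ℝ) :
    pd i (pd j u) z = pd j (pd i u) z := by
  have hd : DifferentiableAt ℝ (fderiv ℝ u) z :=
    ((hu.fderiv_right (m := 1) (by norm_num)).differentiable (by norm_num)).differentiableAt
  have key : ∀ a b : Fin 4, pd a (pd b u) z =
      fderiv ℝ (fderiv ℝ u) z (Pi.single a 1) (Pi.single b 1) := by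
    intro a b
    rw [show pd a (pd b u) z =
      fderiv ℝ (fun y => (fderiv ℝ u y) (Pi.single b 1)) z (Pi.single a 1) from rfl]
    rw [fderiv_clm_apply hd (differentiableAt_const _)]
    simp
  rw [key, key]
  exact (hu.contDiffAt.isSymmSndFDerivAt (by norm_num)) _ _

lemma KS_pd_mul_add {g h : (Fin 4 → ℝ) → ℝ} (a b i : Fin 4) (z : Fin 4 → ℝ)
    (hg : DifferentiableAt ℝ g z) (hh : DifferentiableAt ℝ h z) :
    pd i (fun y => y a * g y + y b * h y) z =
      (Pi.single i 1 : Fin 4 → ℝ) a * g z + z a * pd i g z +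
      ((Pi.single i 1 : Fin 4 → ℝ) b * h z + z b * pd i h z) := by
  have hca : DifferentiableAt ℝ (fun y : Fin 4 → ℝ => y a) z :=
    (ContinuousLinearMap.proj a : (Fin 4 → ℝ) →L[ℝ] ℝ).differentiableAt
  have hcb : DifferentiableAt ℝ (fun y : Fin 4 → ℝ => y b) z :=
    (ContinuousLinearMap.proj b : (Fin 4 → ℝ) →L[ℝ] ℝ).differentiableAt
  have fca : fderiv ℝ (fun y : Fin 4 → ℝ => y a) z = ContinuousLinearMap.proj a :=
    (ContinuousLinearMap.proj a : (Fin 4 → ℝ) →L[ℝ] ℝ).fderiv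
  have fcb : fderiv ℝ (fun y : Fin 4 → ℝ => y b) z = ContinuousLinearMap.proj b :=
    (ContinuousLinearMap.proj b : (Fin 4 → ℝ) →L[ℝ] ℝ).fderiv
  show fderiv ℝ _ z (Pi.single i 1) = _
  rw [fderiv_fun_add (f := fun y => y a * g y) (g := fun y => y b * h y) (hca.mul hg) (hcb.mul hh), fderiv_fun_mul hca hg, fderiv_fun_mul hcb hh]
  simp [fca, fcb, pd]
  ring


set_option maxHeartbeats 2000000

/-- Klainerman–Sideris type pointwise estimate: there is a constant `C` such
that for every `w ∈ C²(ℝ₊×ℝ³)`, every `t ≥ 0` and `x ∈ ℝ³`,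
`⟨t-r⟩ |∇_x ∂_t w(t,x)| ≤ C Σ_{|α|≤1} |∂Γ^α w(t,x)| + C t |□w(t,x)|`. -/
theorem stmt7 :
    ∃ C : ℝ, 0 < C ∧
      ∀ w : (Fin 4 → ℝ) → ℝ, ContDiff ℝ 2 w →
        ∀ t : ℝ, 0 ≤ t → ∀ x : Fin 3 → ℝ,
          Real.sqrt (1 + (t - Real.sqrt ((x 0)^2 + (x 1)^2 + (x 2)^2))^2) *
              Real.sqrt ((pd 1 (pd 0 w) (Fin.cons t x))^2 + (pd 2 (pd 0 w) (Fin.cons t x))^2 +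
                (pd 3 (pd 0 w) (Fin.cons t x))^2) ≤
            C * (∑ n ∈ Finset.range 2, ∑ σ : Fin n → Fin 10, ∑ i : Fin 4,
                  |pd i (opIter GammaField (List.ofFn σ) w) (Fin.cons t x)|) +
            C * t * |Box w (Fin.cons t x)| := by
  classical
  refine ⟨200, by norm_num, ?_⟩
  intro w hw t ht x
  set z : Fin 4 → ℝ := Fin.cons t x with hzdef
  set r : ℝ := Real.sqrt ((x 0)^2 + (x 1)^2 + (x 2)^2) with hrdef
  have hr0 : 0 ≤ r := Real.sqrt_nonneg _
  have hr2 : r^2 = (x 0)^2 + (x 1)^2 + (x 2)^2 := Real.sq_sqrt (by positivity)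
  -- the two parts of the right-hand side sum
  set S0 : ℝ := ∑ i : Fin 4, |pd i w z| with hS0def
  set S1 : ℝ := ∑ j : Fin 10, ∑ i : Fin 4, |pd i (GammaField j w) z| with hS1def
  have hSsum : (∑ n ∈ Finset.range 2, ∑ σ : Fin n → Fin 10, ∑ i : Fin 4,
      |pd i (opIter GammaField (List.ofFn σ) w) z|) = S0 + S1 := by
    rw [Finset.sum_range_succ, Finset.sum_range_succ, Finset.sum_range_zero, zero_add]
    have h0 : (∑ σ : Fin 0 → Fin 10, ∑ i : Fin 4,
        |pd i (opIter GammaField (List.ofFn σ) w) z|) = S0 := by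
      rw [Finset.univ_unique, Finset.sum_singleton]
      rfl
    have h1 : (∑ σ : Fin 1 → Fin 10, ∑ i : Fin 4,
        |pd i (opIter GammaField (List.ofFn σ) w) z|) = S1 :=
      Fintype.sum_equiv (Equiv.funUnique (Fin 1) (Fin 10)) _ _ (fun σ => rfl)
    rw [h0, h1]
  have term0_le : ∀ i : Fin 4, |pd i w z| ≤ S0 := fun i => by
    rw [hS0def]
    exact Finset.single_le_sum (f := fun i' : Fin 4 => |pd i' w z|)
      (fun j _ => abs_nonneg _) (Finset.mem_univ i)
  have term1_le : ∀ (j : Fin 10) (i : Fin 4), |pd i (GammaField j w) z| ≤ S1 := fun j i => by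
    rw [hS1def]
    calc |pd i (GammaField j w) z| ≤ ∑ i' : Fin 4, |pd i' (GammaField j w) z| :=
          Finset.single_le_sum (f := fun i' : Fin 4 => |pd i' (GammaField j w) z|)
            (fun i' _ => abs_nonneg _) (Finset.mem_univ i)
      _ ≤ ∑ j' : Fin 10, ∑ i' : Fin 4, |pd i' (GammaField j' w) z| :=
          Finset.single_le_sum (f := fun j' : Fin 10 => ∑ i' : Fin 4, |pd i' (GammaField j' w) z|)
            (fun j' _ => Finset.sum_nonneg fun i' _ => abs_nonneg _) (Finset.mem_univ j)
  have hS0nn : 0 ≤ S0 := le_trans (abs_nonneg _) (term0_le 0)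
  have hS1nn : 0 ≤ S1 := le_trans (abs_nonneg _) (term1_le 0 0)
  -- calculus
  have hdiff : ∀ i : Fin 4, DifferentiableAt ℝ (pd i w) z := fun i => KS_diffAt_pd hw i z
  have g7 : ∀ i : Fin 4, pd i (GammaField 7 w) z =
      (Pi.single i 1 : Fin 4 → ℝ) 1 * pd 0 w z + z 1 * pd i (pd 0 w) z +
      ((Pi.single i 1 : Fin 4 → ℝ) 0 * pd 1 w z + z 0 * pd i (pd 1 w) z) :=
    fun i => KS_pd_mul_add 1 0 i z (hdiff 0) (hdiff 1)
  have g8 : ∀ i : Fin 4, pd i (GammaField 8 w) z =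
      (Pi.single i 1 : Fin 4 → ℝ) 2 * pd 0 w z + z 2 * pd i (pd 0 w) z +
      ((Pi.single i 1 : Fin 4 → ℝ) 0 * pd 2 w z + z 0 * pd i (pd 2 w) z) :=
    fun i => KS_pd_mul_add 2 0 i z (hdiff 0) (hdiff 2)
  have g9 : ∀ i : Fin 4, pd i (GammaField 9 w) z =
      (Pi.single i 1 : Fin 4 → ℝ) 3 * pd 0 w z + z 3 * pd i (pd 0 w) z +
      ((Pi.single i 1 : Fin 4 → ℝ) 0 * pd 3 w z + z 0 * pd i (pd 3 w) z) :=
    fun i => KS_pd_mul_add 3 0 i z (hdiff 0) (hdiff 3)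
  have hz0 : z 0 = t := rfl
  have hz1 : z 1 = x 0 := rfl
  have hz2 : z 2 = x 1 := rfl
  have hz3 : z 3 = x 2 := rfl
  -- second derivatives
  set A : ℝ := pd 0 (pd 0 w) z with hAdef
  set B1 : ℝ := pd 1 (pd 0 w) z with hB1def
  set B2 : ℝ := pd 2 (pd 0 w) z with hB2def
  set B3 : ℝ := pd 3 (pd 0 w) z with hB3def
  set C11 : ℝ := pd 1 (pd 1 w) z with hC11def
  set C22 : ℝ := pd 2 (pd 2 w) z with hC22def
  set C33 : ℝ := pd 3 (pd 3 w) z with hC33def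
  set C12 : ℝ := pd 1 (pd 2 w) z with hC12def
  set C13 : ℝ := pd 1 (pd 3 w) z with hC13def
  set C23 : ℝ := pd 2 (pd 3 w) z with hC23def
  set D : ℝ := Box w z with hDdef
  have hD : D = A - C11 - C22 - C33 := rfl
  -- symmetry of second derivatives
  have hc01 : pd 0 (pd 1 w) z = B1 := (KS_pd_comm hw 0 1 z).trans hB1def.symm
  have hc02 : pd 0 (pd 2 w) z = B2 := (KS_pd_comm hw 0 2 z).trans hB2def.symm
  have hc03 : pd 0 (pd 3 w) z = B3 := (KS_pd_comm hw 0 3 z).trans hB3def.symm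
  have hc21 : pd 2 (pd 1 w) z = C12 := (KS_pd_comm hw 2 1 z).trans hC12def.symm
  have hc31 : pd 3 (pd 1 w) z = C13 := (KS_pd_comm hw 3 1 z).trans hC13def.symm
  have hc32 : pd 3 (pd 2 w) z = C23 := (KS_pd_comm hw 3 2 z).trans hC23def.symm
  -- the P and Q quantities
  set P1 : ℝ := pd 0 (GammaField 7 w) z - pd 1 w z with hP1def
  set P2 : ℝ := pd 0 (GammaField 8 w) z - pd 2 w z with hP2def
  set P3 : ℝ := pd 0 (GammaField 9 w) z - pd 3 w z with hP3def
  set Q11 : ℝ := pd 1 (GammaField 7 w) z - pd 0 w z with hQ11def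
  set Q12 : ℝ := pd 1 (GammaField 8 w) z with hQ12def
  set Q13 : ℝ := pd 1 (GammaField 9 w) z with hQ13def
  set Q21 : ℝ := pd 2 (GammaField 7 w) z with hQ21def
  set Q22 : ℝ := pd 2 (GammaField 8 w) z - pd 0 w z with hQ22def
  set Q23 : ℝ := pd 2 (GammaField 9 w) z with hQ23def
  set Q31 : ℝ := pd 3 (GammaField 7 w) z with hQ31def
  set Q32 : ℝ := pd 3 (GammaField 8 w) z with hQ32def
  set Q33 : ℝ := pd 3 (GammaField 9 w) z - pd 0 w z with hQ33def
  have hP1 : P1 = x 0 * A + t * B1 := by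
    rw [hP1def, g7 0, hc01, hAdef]
    norm_num [Pi.single_apply, Fin.ext_iff, show ((0:Fin 4):ℕ) = 0 from rfl,
      show ((1:Fin 4):ℕ) = 1 from rfl, show ((2:Fin 4):ℕ) = 2 from rfl,
      show ((3:Fin 4):ℕ) = 3 from rfl, hz0, hz1] <;> ring
  have hP2 : P2 = x 1 * A + t * B2 := by
    rw [hP2def, g8 0, hc02, hAdef]
    norm_num [Pi.single_apply, Fin.ext_iff, show ((0:Fin 4):ℕ) = 0 from rfl,
      show ((1:Fin 4):ℕ) = 1 from rfl, show ((2:Fin 4):ℕ) = 2 from rfl,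
      show ((3:Fin 4):ℕ) = 3 from rfl, hz0, hz2] <;> ring
  have hP3 : P3 = x 2 * A + t * B3 := by
    rw [hP3def, g9 0, hc03, hAdef]
    norm_num [Pi.single_apply, Fin.ext_iff, show ((0:Fin 4):ℕ) = 0 from rfl,
      show ((1:Fin 4):ℕ) = 1 from rfl, show ((2:Fin 4):ℕ) = 2 from rfl,
      show ((3:Fin 4):ℕ) = 3 from rfl, hz0, hz3] <;> ring
  have hQ11 : Q11 = x 0 * B1 + t * C11 := by
    rw [hQ11def, g7 1, hB1def, hC11def]
    norm_num [Pi.single_apply, Fin.ext_iff, show ((0:Fin 4):ℕ) = 0 from rfl,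
      show ((1:Fin 4):ℕ) = 1 from rfl, show ((2:Fin 4):ℕ) = 2 from rfl,
      show ((3:Fin 4):ℕ) = 3 from rfl, hz0, hz1] <;> ring
  have hQ12 : Q12 = x 1 * B1 + t * C12 := by
    rw [hQ12def, g8 1, hB1def, hC12def]
    norm_num [Pi.single_apply, Fin.ext_iff, show ((0:Fin 4):ℕ) = 0 from rfl,
      show ((1:Fin 4):ℕ) = 1 from rfl, show ((2:Fin 4):ℕ) = 2 from rfl,
      show ((3:Fin 4):ℕ) = 3 from rfl, hz0, hz2] <;> ring
  have hQ13 : Q13 = x 2 * B1 + t * C13 := by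
    rw [hQ13def, g9 1, hB1def, hC13def]
    norm_num [Pi.single_apply, Fin.ext_iff, show ((0:Fin 4):ℕ) = 0 from rfl,
      show ((1:Fin 4):ℕ) = 1 from rfl, show ((2:Fin 4):ℕ) = 2 from rfl,
      show ((3:Fin 4):ℕ) = 3 from rfl, hz0, hz3] <;> ring
  have hQ21 : Q21 = x 0 * B2 + t * C12 := by
    rw [hQ21def, g7 2, hc21, hB2def]
    norm_num [Pi.single_apply, Fin.ext_iff, show ((0:Fin 4):ℕ) = 0 from rfl,
      show ((1:Fin 4):ℕ) = 1 from rfl, show ((2:Fin 4):ℕ) = 2 from rfl,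
      show ((3:Fin 4):ℕ) = 3 from rfl, hz0, hz1] <;> ring
  have hQ22 : Q22 = x 1 * B2 + t * C22 := by
    rw [hQ22def, g8 2, hB2def, hC22def]
    norm_num [Pi.single_apply, Fin.ext_iff, show ((0:Fin 4):ℕ) = 0 from rfl,
      show ((1:Fin 4):ℕ) = 1 from rfl, show ((2:Fin 4):ℕ) = 2 from rfl,
      show ((3:Fin 4):ℕ) = 3 from rfl, hz0, hz2] <;> ring
  have hQ23 : Q23 = x 2 * B2 + t * C23 := by
    rw [hQ23def, g9 2, hB2def, hC23def]
    norm_num [Pi.single_apply, Fin.ext_iff, show ((0:Fin 4):ℕ) = 0 from rfl,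
      show ((1:Fin 4):ℕ) = 1 from rfl, show ((2:Fin 4):ℕ) = 2 from rfl,
      show ((3:Fin 4):ℕ) = 3 from rfl, hz0, hz3] <;> ring
  have hQ31 : Q31 = x 0 * B3 + t * C13 := by
    rw [hQ31def, g7 3, hc31, hB3def]
    norm_num [Pi.single_apply, Fin.ext_iff, show ((0:Fin 4):ℕ) = 0 from rfl,
      show ((1:Fin 4):ℕ) = 1 from rfl, show ((2:Fin 4):ℕ) = 2 from rfl,
      show ((3:Fin 4):ℕ) = 3 from rfl, hz0, hz1] <;> ring
  have hQ32 : Q32 = x 1 * B3 + t * C23 := by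
    rw [hQ32def, g8 3, hc32, hB3def]
    norm_num [Pi.single_apply, Fin.ext_iff, show ((0:Fin 4):ℕ) = 0 from rfl,
      show ((1:Fin 4):ℕ) = 1 from rfl, show ((2:Fin 4):ℕ) = 2 from rfl,
      show ((3:Fin 4):ℕ) = 3 from rfl, hz0, hz2] <;> ring
  have hQ33 : Q33 = x 2 * B3 + t * C33 := by
    rw [hQ33def, g9 3, hB3def, hC33def]
    norm_num [Pi.single_apply, Fin.ext_iff, show ((0:Fin 4):ℕ) = 0 from rfl,
      show ((1:Fin 4):ℕ) = 1 from rfl, show ((2:Fin 4):ℕ) = 2 from rfl,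
      show ((3:Fin 4):ℕ) = 3 from rfl, hz0, hz3] <;> ring
  -- the three main estimates
  have main1 := KS_arith_B t r (x 0) (x 1) (x 2) A B1 B2 B3 C11 C22 C33 C12 C13 C23 D
    P1 P2 P3 Q11 Q12 Q13 Q21 Q22 Q23 Q31 Q32 Q33 ht hr0 hr2
    hP1 hP2 hP3 hQ11 hQ12 hQ13 hQ21 hQ22 hQ23 hQ31 hQ32 hQ33 hD
  have main2 := KS_arith_B t r (x 1) (x 0) (x 2) A B2 B1 B3 C22 C11 C33 C12 C23 C13 D
    P2 P1 P3 Q22 Q21 Q23 Q12 Q11 Q13 Q32 Q31 Q33 ht hr0 (by linarith)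
    hP2 hP1 hP3 hQ22 hQ21 hQ23 hQ12 hQ11 hQ13 hQ32 hQ31 hQ33 (by rw [hD]; ring)
  have main3 := KS_arith_B t r (x 2) (x 1) (x 0) A B3 B2 B1 C33 C22 C11 C23 C13 C12 D
    P3 P2 P1 Q33 Q32 Q31 Q23 Q22 Q21 Q13 Q12 Q11 ht hr0 (by linarith)
    hP3 hP2 hP1 hQ33 hQ32 hQ31 hQ23 hQ22 hQ21 hQ13 hQ12 hQ11 (by rw [hD]; ring)
  -- bounds by the sums
  have bB1 : |B1| ≤ S1 := by rw [hB1def]; exact term1_le 0 1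
  have bB2 : |B2| ≤ S1 := by rw [hB2def]; exact term1_le 0 2
  have bB3 : |B3| ≤ S1 := by rw [hB3def]; exact term1_le 0 3
  have bP1 : |P1| ≤ S1 + S0 := by
    rw [hP1def]
    exact (abs_sub _ _).trans (add_le_add (term1_le 7 0) (term0_le 1))
  have bP2 : |P2| ≤ S1 + S0 := by
    rw [hP2def]
    exact (abs_sub _ _).trans (add_le_add (term1_le 8 0) (term0_le 2))
  have bP3 : |P3| ≤ S1 + S0 := by
    rw [hP3def]
    exact (abs_sub _ _).trans (add_le_add (term1_le 9 0) (term0_le 3))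
  have bQ11 : |Q11| ≤ S1 + S0 := by
    rw [hQ11def]
    exact (abs_sub _ _).trans (add_le_add (term1_le 7 1) (term0_le 0))
  have bQ22 : |Q22| ≤ S1 + S0 := by
    rw [hQ22def]
    exact (abs_sub _ _).trans (add_le_add (term1_le 8 2) (term0_le 0))
  have bQ33 : |Q33| ≤ S1 + S0 := by
    rw [hQ33def]
    exact (abs_sub _ _).trans (add_le_add (term1_le 9 3) (term0_le 0))
  have bQ12 : |Q12| ≤ S1 := by rw [hQ12def]; exact term1_le 8 1
  have bQ13 : |Q13| ≤ S1 := by rw [hQ13def]; exact term1_le 9 1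
  have bQ21 : |Q21| ≤ S1 := by rw [hQ21def]; exact term1_le 7 2
  have bQ23 : |Q23| ≤ S1 := by rw [hQ23def]; exact term1_le 9 2
  have bQ31 : |Q31| ≤ S1 := by rw [hQ31def]; exact term1_le 7 3
  have bQ32 : |Q32| ≤ S1 := by rw [hQ32def]; exact term1_le 8 3
  -- square-root bounds
  have lhs1 : Real.sqrt (1 + (t - r)^2) ≤ 1 + |t - r| := KS_sqrt1 (t - r)
  have lhs2 : Real.sqrt (B1^2 + B2^2 + B3^2) ≤ |B1| + |B2| + |B3| := KS_sqrt3 B1 B2 B3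
  have hprod : Real.sqrt (1 + (t - r)^2) * Real.sqrt (B1^2 + B2^2 + B3^2) ≤
      (1 + |t - r|) * (|B1| + |B2| + |B3|) :=
    mul_le_mul lhs1 lhs2 (Real.sqrt_nonneg _) (by positivity)
  rw [hSsum]
  have htD : 0 ≤ t * |D| := mul_nonneg ht (abs_nonneg D)
  calc Real.sqrt (1 + (t - r)^2) * Real.sqrt (B1^2 + B2^2 + B3^2)
      ≤ (1 + |t - r|) * (|B1| + |B2| + |B3|) := hprod
    _ = (|B1| + |B2| + |B3|) + (|t - r| * |B1| + |t - r| * |B2| + |t - r| * |B3|) := by ring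
    _ ≤ 200 * (S0 + S1) + 200 * (t * |D|) := by
        linarith only [main1, main2, main3, bB1, bB2, bB3, bP1, bP2, bP3, bQ11, bQ12, bQ13,
          bQ21, bQ22, bQ23, bQ31, bQ32, bQ33, hS0nn, hS1nn, htD]
    _ = 200 * (S0 + S1) + 200 * t * |D| := by ring
end
end
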